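/- Let G be a finite connected graph on n vertices and let {S₁,…,S_m} be a partition of the multiset E^k(G) (each edge of G repeated exactly k times) such that each S_i is an edge cut of G whose removal leaves two connected components G_i and G_i' satisfying: shortest paths within G_i avoid S_i, shortest paths within G_i' avoid S_i, and shortest paths between G_i and G_i' use exactly one edge of S_i. Then W(G) = (1/k) Σ_{i=1}^m |V(G_i)|·|V(G_i')|. -/

import Mathlib

open SimpleGraph Finset

private lemma count_sum_aux {V : Type*} [DecidableEq V] {m k : ℕ} (S : Fin m → Finset (Sym2 V))
    (l : List (Sym2 V))
    (hl : ∀ e ∈ l, (Finset.univ.filter (fun i : Fin m => e ∈ S i)).card = k) :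
    ∑ i : Fin m, l.countP (fun e => decide (e ∈ S i)) = k * l.length := by
  induction l with
  | nil => simp
  | cons e t ih =>
    simp only [List.countP_cons, List.length_cons]
    rw [Finset.sum_add_distrib, ih (fun e he => hl e (List.mem_cons_of_mem _ he))]
    have h1 : ∑ i : Fin m, (if (fun e => decide (e ∈ S i)) e then 1 else 0) =
        (Finset.univ.filter (fun i : Fin m => e ∈ S i)).card := by
      simp only [decide_eq_true_eq, Finset.card_filter]
    rw [h1, hl e List.mem_cons_self]
    ring

theorem stmt4 {V : Type*} [Fintype V] [DecidableEq V] (G : SimpleGraph V)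
    [DecidableRel G.Adj]
    (hconn : G.Connected) (m k : ℕ) (hk : 0 < k) (S : Fin m → Finset (Sym2 V))
    (hsub : ∀ i, S i ⊆ G.edgeFinset)
    (hmult : ∀ e ∈ G.edgeFinset,
      (Finset.univ.filter (fun i : Fin m => e ∈ S i)).card = k)
    (A B : Fin m → Finset V)
    (hdisj : ∀ i, Disjoint (A i) (B i)) (hcover : ∀ i, A i ∪ B i = Finset.univ)
    (hAne : ∀ i, (A i).Nonempty) (hBne : ∀ i, (B i).Nonempty)
    (hcomp : ∀ i, ∀ u v : V, (G.deleteEdges ↑(S i)).Reachable u v ↔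
      ((u ∈ A i ∧ v ∈ A i) ∨ (u ∈ B i ∧ v ∈ B i)))
    (hi : ∀ i, ∀ u v : V, u ∈ A i → v ∈ A i → ∀ p : G.Walk u v,
      p.length = G.dist u v → ∀ e ∈ p.edges, e ∉ S i)
    (hii : ∀ i, ∀ u v : V, u ∈ B i → v ∈ B i → ∀ p : G.Walk u v,
      p.length = G.dist u v → ∀ e ∈ p.edges, e ∉ S i)
    (hiii : ∀ i, ∀ u v : V, u ∈ A i → v ∈ B i → ∀ p : G.Walk u v,
      p.length = G.dist u v → p.edges.countP (fun e => decide (e ∈ S i)) = 1) :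
    k * ∑ u : V, ∑ v : V, G.dist u v = 2 * ∑ i : Fin m, (A i).card * (B i).card := by
  have key : ∀ u v : V, k * G.dist u v =
      ∑ i : Fin m, (if (u ∈ A i ∧ v ∈ B i) ∨ (u ∈ B i ∧ v ∈ A i) then 1 else 0) := by
    intro u v
    obtain ⟨p, hp⟩ := hconn.exists_walk_length_eq_dist u v
    have hedges : ∀ e ∈ p.edges, (Finset.univ.filter (fun i : Fin m => e ∈ S i)).card = k := by
      intro e he
      exact hmult e (by rw [mem_edgeFinset]; exact p.edges_subset_edgeSet he)
    have hsum := count_sum_aux S p.edges hedges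
    rw [p.length_edges, hp] at hsum
    rw [← hsum]
    apply Finset.sum_congr rfl
    intro i _
    have hu : u ∈ A i ∨ u ∈ B i := by
      have := (hcover i) ▸ Finset.mem_univ u
      exact Finset.mem_union.mp this
    have hv : v ∈ A i ∨ v ∈ B i := by
      have := (hcover i) ▸ Finset.mem_univ v
      exact Finset.mem_union.mp this
    have hdAB : ∀ x : V, x ∈ A i → x ∈ B i → False := fun x hx1 hx2 =>
      Finset.disjoint_left.mp (hdisj i) hx1 hx2
    rcases hu with hu | hu <;> rcases hv with hv | hv
    · rw [List.countP_eq_zero.mpr, if_neg]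
      · rintro (⟨_, h⟩ | ⟨h, _⟩) <;> exact hdAB _ ‹_› h
      · intro e he
        simpa using hi i u v hu hv p hp e he
    · rw [hiii i u v hu hv p hp, if_pos (Or.inl ⟨hu, hv⟩)]
    · have hrev : (p.reverse).length = G.dist v u := by
        rw [Walk.length_reverse, hp, G.dist_comm]
      have := hiii i v u hv hu p.reverse hrev
      rw [Walk.edges_reverse, List.countP_reverse] at this
      rw [this, if_pos (Or.inr ⟨hu, hv⟩)]
    · rw [List.countP_eq_zero.mpr, if_neg]
      · rintro (⟨h, _⟩ | ⟨_, h⟩) <;> exact hdAB _ h ‹_›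
      · intro e he
        simpa using hii i u v hu hv p hp e he
  calc k * ∑ u : V, ∑ v : V, G.dist u v
      = ∑ u : V, ∑ v : V, k * G.dist u v := by simp_rw [Finset.mul_sum]
    _ = ∑ u : V, ∑ v : V, ∑ i : Fin m,
        (if (u ∈ A i ∧ v ∈ B i) ∨ (u ∈ B i ∧ v ∈ A i) then 1 else 0) := by
        simp_rw [key]
    _ = ∑ i : Fin m, ∑ u : V, ∑ v : V,
        (if (u ∈ A i ∧ v ∈ B i) ∨ (u ∈ B i ∧ v ∈ A i) then 1 else 0) := by
        rw [Finset.sum_congr rfl fun (u : V) _ =>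
          (Finset.sum_comm (s := (Finset.univ : Finset V)) (t := (Finset.univ : Finset (Fin m)))
            (f := fun v i => if u ∈ A i ∧ v ∈ B i ∨ u ∈ B i ∧ v ∈ A i then 1 else 0))]
        exact Finset.sum_comm
    _ = 2 * ∑ i : Fin m, (A i).card * (B i).card := by
        rw [Finset.mul_sum]
        apply Finset.sum_congr rfl
        intro i _
        have hsplit : ∀ u v : V,
            (if (u ∈ A i ∧ v ∈ B i) ∨ (u ∈ B i ∧ v ∈ A i) then (1:ℕ) else 0) =
            (if u ∈ A i then 1 else 0) * (if v ∈ B i then 1 else 0) +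
            (if u ∈ B i then 1 else 0) * (if v ∈ A i then 1 else 0) := by
          intro u v
          by_cases h1 : u ∈ A i <;> by_cases h2 : v ∈ B i <;>
            by_cases h3 : u ∈ B i <;> by_cases h4 : v ∈ A i <;>
            first
              | (exfalso; exact Finset.disjoint_left.mp (hdisj i) ‹_› ‹_›)
              | simp [h1, h2, h3, h4]
        simp_rw [hsplit]
        rw [Finset.sum_comm]
        simp_rw [Finset.sum_add_distrib, ← Finset.sum_mul, ← Finset.mul_sum,
          Finset.sum_boole]
        push_cast
        simp only [Finset.filter_univ_mem]
        ring
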